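/- For each fixed n ≥ 1, Σ_{k=0}^{∞} c_n^{(k)} / 2^k = 2^{2n} (n!)^2 / (2n)!. -/

import Mathlib

open Finset

lemma partialFrac : ∀ (n : ℕ) (x : ℝ), (∀ i : ℕ, i ≤ n → x + i ≠ 0) →
    ∑ j ∈ range (n+1), (-1:ℝ)^j * (n.choose j) / (x + j)
      = (n.factorial : ℝ) / ∏ i ∈ range (n+1), (x + i) := by
  intro n
  induction n with
  | zero => intro x hx; simp
  | succ n ih =>
    intro x hx
    have hx0 : x ≠ 0 := by simpa using hx 0 (by omega)
    have hx' : ∀ i : ℕ, i ≤ n → x + i ≠ 0 := fun i hi => hx i (by omega)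
    have hx1 : ∀ i : ℕ, i ≤ n → (x+1) + (i:ℝ) ≠ 0 := by
      intro i hi
      have h := hx (i+1) (by omega)
      push_cast at h
      intro hc; apply h; linarith
    have hS : ∑ k ∈ range (n+1), (-1:ℝ)^(k+1) * (n.choose (k+1)) / (x + ((k:ℝ)+1))
        = (∑ j ∈ range (n+1), (-1:ℝ)^j * (n.choose j)/(x+j)) - 1/x := by
      rw [Finset.sum_range_succ, Finset.sum_range_succ'
        (fun j => (-1:ℝ)^j * (n.choose j)/(x+(j:ℝ))) n]
      simp [Nat.choose_succ_self]
    have key : ∑ j ∈ range (n+2), (-1:ℝ)^j * (((n+1).choose j : ℕ) : ℝ) / (x+j)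
        = (∑ j ∈ range (n+1), (-1:ℝ)^j * (n.choose j) / (x+j))
          - (∑ j ∈ range (n+1), (-1:ℝ)^j * (n.choose j) / ((x+1)+j)) := by
      rw [Finset.sum_range_succ'
        (fun j => (-1:ℝ)^j * (((n+1).choose j : ℕ) : ℝ)/(x+(j:ℝ))) (n+1)]
      have h1 : ∀ k ∈ range (n+1),
          (-1:ℝ)^(k+1) * (((n+1).choose (k+1) : ℕ) : ℝ)/(x+((k+1:ℕ):ℝ))
          = (-((-1:ℝ)^k * (n.choose k)/((x+1)+k)))
            + (-1:ℝ)^(k+1)*((n.choose (k+1) : ℕ):ℝ)/(x+((k:ℝ)+1)) := by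
        intro k hk
        rw [Nat.choose_succ_succ]
        push_cast
        ring
      rw [Finset.sum_congr rfl h1, Finset.sum_add_distrib, Finset.sum_neg_distrib, hS]
      simp
      ring
    calc ∑ j ∈ range (n+1+1), (-1:ℝ)^j * ((n+1).choose j) / (x + j)
        = (∑ j ∈ range (n+1), (-1:ℝ)^j * (n.choose j) / (x+j))
          - (∑ j ∈ range (n+1), (-1:ℝ)^j * (n.choose j) / ((x+1)+j)) := key
      _ = (n.factorial : ℝ) / ∏ i ∈ range (n+1), (x + i)
          - (n.factorial : ℝ) / ∏ i ∈ range (n+1), ((x+1) + i) := by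
            rw [ih x hx', ih (x+1) hx1]
      _ = ((n+1).factorial : ℝ) / ∏ i ∈ range (n+1+1), (x + i) := by
            have hA : (∏ i ∈ range (n+1), (x + (i:ℝ))) ≠ 0 :=
              Finset.prod_ne_zero_iff.mpr fun i hi =>
                hx i (by have := Finset.mem_range.mp hi; omega)
            have hB : (∏ i ∈ range (n+1), ((x+1) + (i:ℝ))) ≠ 0 :=
              Finset.prod_ne_zero_iff.mpr fun i hi =>
                hx1 i (Nat.lt_succ_iff.mp (Finset.mem_range.mp hi))
            have hP1 : ∏ i ∈ range (n+2), (x + (i:ℝ))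
                = (∏ i ∈ range (n+1), (x + (i:ℝ))) * (x + ((n:ℝ)+1)) := by
              rw [Finset.prod_range_succ]; push_cast; ring
            have hP2 : ∏ i ∈ range (n+2), (x + (i:ℝ))
                = (∏ i ∈ range (n+1), ((x+1) + (i:ℝ))) * x := by
              rw [Finset.prod_range_succ' (fun i => x + (i:ℝ)) (n+1)]
              simp only [Nat.cast_zero, add_zero, Nat.cast_add, Nat.cast_one]
              congr 1
              apply Finset.prod_congr rfl
              intro i _
              push_cast
              ring
            have hBA : (∏ i ∈ range (n+1), ((x+1) + (i:ℝ))) * x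
                = (∏ i ∈ range (n+1), (x + (i:ℝ))) * (x + ((n:ℝ)+1)) := by
              rw [← hP1, ← hP2]
            rw [Nat.factorial_succ]
            rw [show ((n:ℕ)+1+1) = n+2 from rfl, hP2]
            push_cast
            rw [div_sub_div _ _ hA hB, div_eq_div_iff (by exact mul_ne_zero hA hB)
              (by exact mul_ne_zero hB hx0)]
            linear_combination (n.factorial:ℝ) * (∏ i ∈ range (n+1), ((x+1) + (i:ℝ))) * hBA


/-- Roman harmonic number `c_n^{(k)}` as a real number. -/
noncomputable def romanHarmonic (n k : ℕ) : ℝ :=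
  ∑ j ∈ Finset.Icc 1 n, (-1 : ℝ) ^ (j - 1) * (n.choose j) / (j : ℝ) ^ k

lemma prodHalf (n : ℕ) : ∏ i ∈ range (n+1), ((-1/2 : ℝ) + i)
    = -(Nat.factorial (2*n)) / (2^(2*n+1) * Nat.factorial n) := by
  induction n with
  | zero => norm_num
  | succ n ih =>
    rw [Finset.prod_range_succ, ih]
    have h1 : (Nat.factorial (2*(n+1)) : ℝ) = (2*(n:ℝ)+2)*(2*n+1)*Nat.factorial (2*n) := by
      rw [show 2*(n+1) = (2*n+1)+1 by ring, Nat.factorial_succ, Nat.factorial_succ]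
      push_cast; ring
    rw [h1, Nat.factorial_succ]
    have h2 : ((2:ℝ))^(2*(n+1)+1) = 4 * 2^(2*n+1) := by
      rw [show 2*(n+1)+1 = (2*n+1)+2 by ring]; ring
    rw [h2]
    have hf : (Nat.factorial n : ℝ) ≠ 0 := Nat.cast_ne_zero.mpr n.factorial_ne_zero
    have hp : ((2:ℝ))^(2*n+1) ≠ 0 := by positivity
    push_cast
    field_simp
    ring

lemma altSumChoose (n : ℕ) (hn : n ≠ 0) :
    ∑ j ∈ range (n+1), (-1:ℝ)^j * (n.choose j) = 0 := by
  have h := Int.alternating_sum_range_choose_of_ne (n := n) hn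
  have : ((∑ m ∈ range (n+1), (-1:ℤ)^m * (n.choose m) : ℤ) : ℝ) = 0 := by rw [h]; simp
  push_cast at this
  convert this using 1

theorem roman_harmonic_sum_half (n : ℕ) (hn : 1 ≤ n) :
    HasSum (fun k : ℕ => romanHarmonic n k / 2 ^ k)
      (2 ^ (2 * n) * (Nat.factorial n : ℝ) ^ 2 / (Nat.factorial (2 * n) : ℝ)) := by
  have hgeo : ∀ j ∈ Finset.Icc 1 n, HasSum
      (fun k : ℕ => ((-1:ℝ)^(j-1) * (n.choose j)) * ((2*(j:ℝ))⁻¹)^k)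
      (((-1:ℝ)^(j-1) * (n.choose j)) * (1 - (2*(j:ℝ))⁻¹)⁻¹) := by
    intro j hj
    have hj1 := (Finset.mem_Icc.mp hj).1
    have hjpos : (1:ℝ) ≤ (j:ℝ) := by exact_mod_cast hj1
    have hr0 : (0:ℝ) ≤ (2*(j:ℝ))⁻¹ := by positivity
    have hr1 : (2*(j:ℝ))⁻¹ < 1 := by
      rw [inv_lt_one_iff₀]; right; linarith
    exact (hasSum_geometric_of_lt_one hr0 hr1).mul_left _
  have hsum := hasSum_sum hgeo
  have hfun : (fun k : ℕ => ∑ j ∈ Finset.Icc 1 n,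
      ((-1:ℝ)^(j-1) * (n.choose j)) * ((2*(j:ℝ))⁻¹)^k)
      = fun k => romanHarmonic n k / 2^k := by
    funext k
    rw [romanHarmonic, Finset.sum_div]
    apply Finset.sum_congr rfl
    intro j hj
    have hj1 := (Finset.mem_Icc.mp hj).1
    have hj0 : (j:ℝ) ≠ 0 := Nat.cast_ne_zero.mpr (by omega)
    have hjpos : (0:ℝ) < j := by positivity
    rw [mul_inv, mul_pow, inv_pow, inv_pow, div_div]
    field_simp
  rw [hfun] at hsum
  -- now compute the value
  have hrange : range (n+1) = insert 0 (Finset.Icc 1 n) := by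
    ext x; simp [Finset.mem_range, Finset.mem_Icc]; omega
  have h0 : (0:ℕ) ∉ Finset.Icc 1 n := by simp
  have halt : ∑ j ∈ Finset.Icc 1 n, (-1:ℝ)^j * (n.choose j) = -1 := by
    have hR := altSumChoose n (by omega)
    rw [hrange, Finset.sum_insert h0] at hR
    simp at hR
    linarith
  have hhalf : ∀ i : ℕ, i ≤ n → (-1/2 : ℝ) + i ≠ 0 := by
    intro i _ h
    have h2 : ((2*i : ℕ) : ℝ) = 1 := by push_cast; linarith
    have : (2*i : ℕ) = 1 := by exact_mod_cast h2
    omega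
  have hpf := partialFrac n (-1/2) hhalf
  rw [prodHalf n] at hpf
  -- full M sum over range (n+1)
  have hMfull : ∑ j ∈ range (n+1), (-1:ℝ)^j * (n.choose j) / (2*j - 1)
      = -(2^(2*n) * (n.factorial:ℝ)^2 / (2*n).factorial) := by
    have hterm : ∀ j ∈ range (n+1), (-1:ℝ)^j * (n.choose j) / (2*j-1)
        = (1/2) * ((-1:ℝ)^j * (n.choose j) / ((-1/2) + j)) := by
      intro j hj
      have hjne : (-1/2 : ℝ) + j ≠ 0 := hhalf j (by
        have := Finset.mem_range.mp hj; omega)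
      rw [show (-1/2 : ℝ) + (j:ℝ) = (2*(j:ℝ)-1)/2 by ring, div_div_eq_mul_div]
      ring
    rw [Finset.sum_congr rfl hterm, ← Finset.mul_sum, hpf]
    have hf2n : ((2*n).factorial : ℝ) ≠ 0 := Nat.cast_ne_zero.mpr (Nat.factorial_ne_zero _)
    have hfn : ((n).factorial : ℝ) ≠ 0 := Nat.cast_ne_zero.mpr (Nat.factorial_ne_zero _)
    have hp : ((2:ℝ))^(2*n+1) ≠ 0 := by positivity
    rw [show ((2:ℝ))^(2*n+1) = 2 * 2^(2*n) by ring]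
    field_simp
  have hM : ∑ j ∈ Finset.Icc 1 n, (-1:ℝ)^j * (n.choose j) / (2*j - 1)
      = -(2^(2*n) * (n.factorial:ℝ)^2 / (2*n).factorial) + 1 := by
    rw [hrange, Finset.sum_insert h0] at hMfull
    norm_num at hMfull
    linarith
  have hval : ∑ j ∈ Finset.Icc 1 n,
      ((-1:ℝ)^(j-1) * (n.choose j)) * (1 - (2*(j:ℝ))⁻¹)⁻¹
      = 2 ^ (2 * n) * (Nat.factorial n : ℝ) ^ 2 / (Nat.factorial (2 * n) : ℝ) := by
    have hterm : ∀ j ∈ Finset.Icc 1 n,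
        ((-1:ℝ)^(j-1) * (n.choose j)) * (1 - (2*(j:ℝ))⁻¹)⁻¹
        = -((-1:ℝ)^j * (n.choose j)) - ((-1:ℝ)^j * (n.choose j) / (2*j - 1)) := by
      intro j hj
      have hj1 := (Finset.mem_Icc.mp hj).1
      obtain ⟨m, rfl⟩ : ∃ m, j = m + 1 := ⟨j - 1, by omega⟩
      have hmnn : (0:ℝ) ≤ (m:ℝ) := Nat.cast_nonneg m
      have h2j : (2*((m:ℝ)+1) - 1) ≠ 0 := by intro h; linarith
      have hj0 : (2*((m:ℝ)+1)) ≠ 0 := by intro h; linarith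
      have hinv : (1 - (2*((m:ℝ)+1))⁻¹) = (2*((m:ℝ)+1)-1)/(2*((m:ℝ)+1)) := by
        field_simp
      simp only [Nat.add_sub_cancel]
      push_cast
      rw [hinv, inv_div, pow_succ]
      field_simp
      ring
    rw [Finset.sum_congr rfl hterm, Finset.sum_sub_distrib, Finset.sum_neg_distrib,
      halt, hM]
    ring
  rw [hval] at hsum
  exact hsum
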